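/- For n ≤ 3 voters, every instance (c,k) is integralizable: every integer utility vector that is fractional-committee-feasible is also integral-committee-feasible. -/
import Mathlib


/-- Candidate types: non-empty subsets of the voter set `Fin n`. -/
abbrev Typ (n : ℕ) := {S : Finset (Fin n) // S.Nonempty}

/-- Utility of voter `i` under an integral committee `x`. -/
def intUtil {n : ℕ} (x : Typ n → ℕ) (i : Fin n) : ℤ :=
  ∑ R : Typ n, if i ∈ R.1 then (x R : ℤ) else 0

/-- Utility of voter `i` under a fractional committee `x`. -/
def fracUtil {n : ℕ} (x : Typ n → ℝ) (i : Fin n) : ℝ :=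
  ∑ R : Typ n, if i ∈ R.1 then x R else 0

/-- `x` is an integral committee for the instance `(c, k)`. -/
def IsIntCommittee {n : ℕ} (c : Typ n → ℕ) (k : ℕ) (x : Typ n → ℕ) : Prop :=
  (∀ R, x R ≤ c R) ∧ (∑ R : Typ n, x R) ≤ k

/-- `x` is a fractional committee for the instance `(c, k)`. -/
def IsFracCommittee {n : ℕ} (c : Typ n → ℕ) (k : ℕ) (x : Typ n → ℝ) : Prop :=
  (∀ R, 0 ≤ x R) ∧ (∀ R, x R ≤ (c R : ℝ)) ∧ (∑ R : Typ n, x R) ≤ (k : ℝ)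

/-- `u` is integral-committee-feasible in `(c, k)`. -/
def IntFeasible {n : ℕ} (c : Typ n → ℕ) (k : ℕ) (u : Fin n → ℤ) : Prop :=
  ∃ x : Typ n → ℕ, IsIntCommittee c k x ∧ ∀ i, u i ≤ intUtil x i

/-- `u` is fractional-committee-feasible in `(c, k)`. -/
def FracFeasible {n : ℕ} (c : Typ n → ℕ) (k : ℕ) (u : Fin n → ℤ) : Prop :=
  ∃ x : Typ n → ℝ, IsFracCommittee c k x ∧ ∀ i, (u i : ℝ) ≤ fracUtil x i

/-- `(c, k)` is integralizable. -/
def Integralizable {n : ℕ} (c : Typ n → ℕ) (k : ℕ) : Prop :=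
  ∀ u : Fin n → ℤ, FracFeasible c k u → IntFeasible c k u


def T1 : Typ 3 := ⟨{0}, by decide⟩
def T2 : Typ 3 := ⟨{1}, by decide⟩
def T3 : Typ 3 := ⟨{2}, by decide⟩
def T12 : Typ 3 := ⟨{0,1}, by decide⟩
def T13 : Typ 3 := ⟨{0,2}, by decide⟩
def T23 : Typ 3 := ⟨{1,2}, by decide⟩
def T123 : Typ 3 := ⟨{0,1,2}, by decide⟩

lemma univ3 : (Finset.univ : Finset (Typ 3)) = {T1, T2, T3, T12, T13, T23, T123} := by decide

lemma sumTyp3 {M : Type*} [AddCommMonoid M] (f : Typ 3 → M) :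
    ∑ R : Typ 3, f R = f T1 + f T2 + f T3 + f T12 + f T13 + f T23 + f T123 := by
  rw [univ3]
  rw [Finset.sum_insert (by decide), Finset.sum_insert (by decide),
      Finset.sum_insert (by decide), Finset.sum_insert (by decide),
      Finset.sum_insert (by decide), Finset.sum_insert (by decide),
      Finset.sum_singleton]
  abel

def U1 : Typ 1 := ⟨{0}, by decide⟩

lemma univ1 : (Finset.univ : Finset (Typ 1)) = {U1} := by decide

lemma sumTyp1 {M : Type*} [AddCommMonoid M] (f : Typ 1 → M) :
    ∑ R : Typ 1, f R = f U1 := by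
  rw [univ1, Finset.sum_singleton]

def V1 : Typ 2 := ⟨{0}, by decide⟩
def V2 : Typ 2 := ⟨{1}, by decide⟩
def V12 : Typ 2 := ⟨{0,1}, by decide⟩

lemma univ2 : (Finset.univ : Finset (Typ 2)) = {V1, V2, V12} := by decide

lemma sumTyp2 {M : Type*} [AddCommMonoid M] (f : Typ 2 → M) :
    ∑ R : Typ 2, f R = f V1 + f V2 + f V12 := by
  rw [univ2, Finset.sum_insert (by decide), Finset.sum_insert (by decide),
      Finset.sum_singleton]
  abel

lemma toNat_cast_le {a : ℤ} {r : ℝ} (h : (a:ℝ) ≤ r) (h0 : 0 ≤ r) : ((a.toNat : ℝ)) ≤ r := by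
  have h1 : (a.toNat : ℝ) = ((a.toNat : ℤ) : ℝ) := by push_cast; ring
  rw [h1, Int.toNat_eq_max]
  push_cast
  exact max_le h h0

set_option maxHeartbeats 4000000 in
set_option maxHeartbeats 4000000 in
theorem key3 (v1 v2 v3 c1 c2 c3 c12 c13 c23 c123 k : ℕ)
 (h1 : v1 ≤ k) (h2 : v2 ≤ k) (h3 : v3 ≤ k)
 (h4 : v1 ≤ c1+c12+c13+c123) (h5 : v2 ≤ c2+c12+c23+c123) (h6 : v3 ≤ c3+c13+c23+c123)
 (h7 : v1+v2 ≤ k+c12+c123) (h8 : v1+v3 ≤ k+c13+c123) (h9 : v2+v3 ≤ k+c23+c123)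
 (h10 : v1+v2+v3 ≤ k+c12+c13+c23+2*c123)
 (h11 : v1+v2+v3 ≤ 2*k+c123)
 (hne : 1 ≤ v1+v2+v3) :
 (1 ≤ c1 ∧ 1 ≤ k ∧ 1 ≤ v1 ∧ (v1-1) ≤ k-1 ∧ v2 ≤ k-1 ∧ v3 ≤ k-1 ∧ (v1-1) ≤ (c1-1)+c12+c13+c123 ∧ v2 ≤ c2+c12+c23+c123 ∧ v3 ≤ c3+c13+c23+c123 ∧ (v1-1)+v2 ≤ (k-1)+c12+c123 ∧ (v1-1)+v3 ≤ (k-1)+c13+c123 ∧ v2+v3 ≤ (k-1)+c23+c123 ∧ (v1-1)+v2+v3 ≤ (k-1)+c12+c13+c23+2*c123 ∧ (v1-1)+v2+v3 ≤ 2*(k-1)+c123) ∨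
 (1 ≤ c2 ∧ 1 ≤ k ∧ 1 ≤ v2 ∧ v1 ≤ k-1 ∧ (v2-1) ≤ k-1 ∧ v3 ≤ k-1 ∧ v1 ≤ c1+c12+c13+c123 ∧ (v2-1) ≤ (c2-1)+c12+c23+c123 ∧ v3 ≤ c3+c13+c23+c123 ∧ v1+(v2-1) ≤ (k-1)+c12+c123 ∧ v1+v3 ≤ (k-1)+c13+c123 ∧ (v2-1)+v3 ≤ (k-1)+c23+c123 ∧ v1+(v2-1)+v3 ≤ (k-1)+c12+c13+c23+2*c123 ∧ v1+(v2-1)+v3 ≤ 2*(k-1)+c123) ∨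
 (1 ≤ c3 ∧ 1 ≤ k ∧ 1 ≤ v3 ∧ v1 ≤ k-1 ∧ v2 ≤ k-1 ∧ (v3-1) ≤ k-1 ∧ v1 ≤ c1+c12+c13+c123 ∧ v2 ≤ c2+c12+c23+c123 ∧ (v3-1) ≤ (c3-1)+c13+c23+c123 ∧ v1+v2 ≤ (k-1)+c12+c123 ∧ v1+(v3-1) ≤ (k-1)+c13+c123 ∧ v2+(v3-1) ≤ (k-1)+c23+c123 ∧ v1+v2+(v3-1) ≤ (k-1)+c12+c13+c23+2*c123 ∧ v1+v2+(v3-1) ≤ 2*(k-1)+c123) ∨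
 (1 ≤ c12 ∧ 1 ≤ k ∧ 1 ≤ v1+v2 ∧ (v1-1) ≤ k-1 ∧ (v2-1) ≤ k-1 ∧ v3 ≤ k-1 ∧ (v1-1) ≤ c1+(c12-1)+c13+c123 ∧ (v2-1) ≤ c2+(c12-1)+c23+c123 ∧ v3 ≤ c3+c13+c23+c123 ∧ (v1-1)+(v2-1) ≤ (k-1)+(c12-1)+c123 ∧ (v1-1)+v3 ≤ (k-1)+c13+c123 ∧ (v2-1)+v3 ≤ (k-1)+c23+c123 ∧ (v1-1)+(v2-1)+v3 ≤ (k-1)+(c12-1)+c13+c23+2*c123 ∧ (v1-1)+(v2-1)+v3 ≤ 2*(k-1)+c123) ∨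
 (1 ≤ c13 ∧ 1 ≤ k ∧ 1 ≤ v1+v3 ∧ (v1-1) ≤ k-1 ∧ v2 ≤ k-1 ∧ (v3-1) ≤ k-1 ∧ (v1-1) ≤ c1+c12+(c13-1)+c123 ∧ v2 ≤ c2+c12+c23+c123 ∧ (v3-1) ≤ c3+(c13-1)+c23+c123 ∧ (v1-1)+v2 ≤ (k-1)+c12+c123 ∧ (v1-1)+(v3-1) ≤ (k-1)+(c13-1)+c123 ∧ v2+(v3-1) ≤ (k-1)+c23+c123 ∧ (v1-1)+v2+(v3-1) ≤ (k-1)+c12+(c13-1)+c23+2*c123 ∧ (v1-1)+v2+(v3-1) ≤ 2*(k-1)+c123) ∨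
 (1 ≤ c23 ∧ 1 ≤ k ∧ 1 ≤ v2+v3 ∧ v1 ≤ k-1 ∧ (v2-1) ≤ k-1 ∧ (v3-1) ≤ k-1 ∧ v1 ≤ c1+c12+c13+c123 ∧ (v2-1) ≤ c2+c12+(c23-1)+c123 ∧ (v3-1) ≤ c3+c13+(c23-1)+c123 ∧ v1+(v2-1) ≤ (k-1)+c12+c123 ∧ v1+(v3-1) ≤ (k-1)+c13+c123 ∧ (v2-1)+(v3-1) ≤ (k-1)+(c23-1)+c123 ∧ v1+(v2-1)+(v3-1) ≤ (k-1)+c12+c13+(c23-1)+2*c123 ∧ v1+(v2-1)+(v3-1) ≤ 2*(k-1)+c123) ∨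
 (1 ≤ c123 ∧ 1 ≤ k ∧ 1 ≤ v1+v2+v3 ∧ (v1-1) ≤ k-1 ∧ (v2-1) ≤ k-1 ∧ (v3-1) ≤ k-1 ∧ (v1-1) ≤ c1+c12+c13+(c123-1) ∧ (v2-1) ≤ c2+c12+c23+(c123-1) ∧ (v3-1) ≤ c3+c13+c23+(c123-1) ∧ (v1-1)+(v2-1) ≤ (k-1)+c12+(c123-1) ∧ (v1-1)+(v3-1) ≤ (k-1)+c13+(c123-1) ∧ (v2-1)+(v3-1) ≤ (k-1)+c23+(c123-1) ∧ (v1-1)+(v2-1)+(v3-1) ≤ (k-1)+c12+c13+c23+2*(c123-1) ∧ (v1-1)+(v2-1)+(v3-1) ≤ 2*(k-1)+(c123-1)) := by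
  by_cases p1 : 1 ≤ v1 <;> by_cases p2 : 1 ≤ v2 <;> by_cases p3 : 1 ≤ v3
  · rcases le_total v2 v1 with o12|o12 <;> rcases le_total v3 v2 with o23|o23 <;> rcases le_total v3 v1 with o13|o13
    · by_cases hc1_7 : 1 ≤ c123
      · exact Or.inr (Or.inr (Or.inr (Or.inr (Or.inr (Or.inr ((by omega)))))))
      · by_cases hc2_4 : 1 ≤ c12
        · exact Or.inr (Or.inr (Or.inr (Or.inl (by omega))))
        · by_cases hc3_5 : 1 ≤ c13
          · exact Or.inr (Or.inr (Or.inr (Or.inr (Or.inl (by omega)))))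
          · by_cases hc4_6 : 1 ≤ c23
            · exact Or.inr (Or.inr (Or.inr (Or.inr (Or.inr (Or.inl (by omega))))))
            · by_cases hc5_1 : 1 ≤ c1
              · exact Or.inl (by omega)
              · by_cases hc6_2 : 1 ≤ c2
                · exact Or.inr (Or.inl (by omega))
                · by_cases hc7_3 : 1 ≤ c3
                  · exact Or.inr (Or.inr (Or.inl (by omega)))
                  · exfalso; omega
    · by_cases hc1_7 : 1 ≤ c123
      · exact Or.inr (Or.inr (Or.inr (Or.inr (Or.inr (Or.inr ((by omega)))))))
      · by_cases hc2_4 : 1 ≤ c12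
        · exact Or.inr (Or.inr (Or.inr (Or.inl (by omega))))
        · by_cases hc3_5 : 1 ≤ c13
          · exact Or.inr (Or.inr (Or.inr (Or.inr (Or.inl (by omega)))))
          · by_cases hc4_6 : 1 ≤ c23
            · exact Or.inr (Or.inr (Or.inr (Or.inr (Or.inr (Or.inl (by omega))))))
            · by_cases hc5_1 : 1 ≤ c1
              · exact Or.inl (by omega)
              · by_cases hc6_2 : 1 ≤ c2
                · exact Or.inr (Or.inl (by omega))
                · by_cases hc7_3 : 1 ≤ c3
                  · exact Or.inr (Or.inr (Or.inl (by omega)))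
                  · exfalso; omega
    · by_cases hc1_7 : 1 ≤ c123
      · exact Or.inr (Or.inr (Or.inr (Or.inr (Or.inr (Or.inr ((by omega)))))))
      · by_cases hc2_5 : 1 ≤ c13
        · exact Or.inr (Or.inr (Or.inr (Or.inr (Or.inl (by omega)))))
        · by_cases hc3_4 : 1 ≤ c12
          · exact Or.inr (Or.inr (Or.inr (Or.inl (by omega))))
          · by_cases hc4_6 : 1 ≤ c23
            · exact Or.inr (Or.inr (Or.inr (Or.inr (Or.inr (Or.inl (by omega))))))
            · by_cases hc5_1 : 1 ≤ c1
              · exact Or.inl (by omega)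
              · by_cases hc6_3 : 1 ≤ c3
                · exact Or.inr (Or.inr (Or.inl (by omega)))
                · by_cases hc7_2 : 1 ≤ c2
                  · exact Or.inr (Or.inl (by omega))
                  · exfalso; omega
    · by_cases hc1_7 : 1 ≤ c123
      · exact Or.inr (Or.inr (Or.inr (Or.inr (Or.inr (Or.inr ((by omega)))))))
      · by_cases hc2_5 : 1 ≤ c13
        · exact Or.inr (Or.inr (Or.inr (Or.inr (Or.inl (by omega)))))
        · by_cases hc3_6 : 1 ≤ c23
          · exact Or.inr (Or.inr (Or.inr (Or.inr (Or.inr (Or.inl (by omega))))))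
          · by_cases hc4_4 : 1 ≤ c12
            · exact Or.inr (Or.inr (Or.inr (Or.inl (by omega))))
            · by_cases hc5_3 : 1 ≤ c3
              · exact Or.inr (Or.inr (Or.inl (by omega)))
              · by_cases hc6_1 : 1 ≤ c1
                · exact Or.inl (by omega)
                · by_cases hc7_2 : 1 ≤ c2
                  · exact Or.inr (Or.inl (by omega))
                  · exfalso; omega
    · by_cases hc1_7 : 1 ≤ c123
      · exact Or.inr (Or.inr (Or.inr (Or.inr (Or.inr (Or.inr ((by omega)))))))
      · by_cases hc2_4 : 1 ≤ c12
        · exact Or.inr (Or.inr (Or.inr (Or.inl (by omega))))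
        · by_cases hc3_6 : 1 ≤ c23
          · exact Or.inr (Or.inr (Or.inr (Or.inr (Or.inr (Or.inl (by omega))))))
          · by_cases hc4_5 : 1 ≤ c13
            · exact Or.inr (Or.inr (Or.inr (Or.inr (Or.inl (by omega)))))
            · by_cases hc5_2 : 1 ≤ c2
              · exact Or.inr (Or.inl (by omega))
              · by_cases hc6_1 : 1 ≤ c1
                · exact Or.inl (by omega)
                · by_cases hc7_3 : 1 ≤ c3
                  · exact Or.inr (Or.inr (Or.inl (by omega)))
                  · exfalso; omega
    · by_cases hc1_7 : 1 ≤ c123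
      · exact Or.inr (Or.inr (Or.inr (Or.inr (Or.inr (Or.inr ((by omega)))))))
      · by_cases hc2_6 : 1 ≤ c23
        · exact Or.inr (Or.inr (Or.inr (Or.inr (Or.inr (Or.inl (by omega))))))
        · by_cases hc3_4 : 1 ≤ c12
          · exact Or.inr (Or.inr (Or.inr (Or.inl (by omega))))
          · by_cases hc4_5 : 1 ≤ c13
            · exact Or.inr (Or.inr (Or.inr (Or.inr (Or.inl (by omega)))))
            · by_cases hc5_2 : 1 ≤ c2
              · exact Or.inr (Or.inl (by omega))
              · by_cases hc6_3 : 1 ≤ c3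
                · exact Or.inr (Or.inr (Or.inl (by omega)))
                · by_cases hc7_1 : 1 ≤ c1
                  · exact Or.inl (by omega)
                  · exfalso; omega
    · by_cases hc1_7 : 1 ≤ c123
      · exact Or.inr (Or.inr (Or.inr (Or.inr (Or.inr (Or.inr ((by omega)))))))
      · by_cases hc2_4 : 1 ≤ c12
        · exact Or.inr (Or.inr (Or.inr (Or.inl (by omega))))
        · by_cases hc3_5 : 1 ≤ c13
          · exact Or.inr (Or.inr (Or.inr (Or.inr (Or.inl (by omega)))))
          · by_cases hc4_6 : 1 ≤ c23
            · exact Or.inr (Or.inr (Or.inr (Or.inr (Or.inr (Or.inl (by omega))))))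
            · by_cases hc5_1 : 1 ≤ c1
              · exact Or.inl (by omega)
              · by_cases hc6_2 : 1 ≤ c2
                · exact Or.inr (Or.inl (by omega))
                · by_cases hc7_3 : 1 ≤ c3
                  · exact Or.inr (Or.inr (Or.inl (by omega)))
                  · exfalso; omega
    · by_cases hc1_7 : 1 ≤ c123
      · exact Or.inr (Or.inr (Or.inr (Or.inr (Or.inr (Or.inr ((by omega)))))))
      · by_cases hc2_6 : 1 ≤ c23
        · exact Or.inr (Or.inr (Or.inr (Or.inr (Or.inr (Or.inl (by omega))))))
        · by_cases hc3_5 : 1 ≤ c13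
          · exact Or.inr (Or.inr (Or.inr (Or.inr (Or.inl (by omega)))))
          · by_cases hc4_4 : 1 ≤ c12
            · exact Or.inr (Or.inr (Or.inr (Or.inl (by omega))))
            · by_cases hc5_3 : 1 ≤ c3
              · exact Or.inr (Or.inr (Or.inl (by omega)))
              · by_cases hc6_2 : 1 ≤ c2
                · exact Or.inr (Or.inl (by omega))
                · by_cases hc7_1 : 1 ≤ c1
                  · exact Or.inl (by omega)
                  · exfalso; omega
  · rcases le_total v2 v1 with o|o
    · by_cases hc2_4 : 1 ≤ c12
      · exact Or.inr (Or.inr (Or.inr (Or.inl (by omega))))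
      · by_cases hc3_7 : 1 ≤ c123
        · exact Or.inr (Or.inr (Or.inr (Or.inr (Or.inr (Or.inr ((by omega)))))))
        · by_cases hc4_1 : 1 ≤ c1
          · exact Or.inl (by omega)
          · by_cases hc5_5 : 1 ≤ c13
            · exact Or.inr (Or.inr (Or.inr (Or.inr (Or.inl (by omega)))))
            · by_cases hc6_2 : 1 ≤ c2
              · exact Or.inr (Or.inl (by omega))
              · by_cases hc7_6 : 1 ≤ c23
                · exact Or.inr (Or.inr (Or.inr (Or.inr (Or.inr (Or.inl (by omega))))))
                · exfalso; omega
    · by_cases hc2_4 : 1 ≤ c12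
      · exact Or.inr (Or.inr (Or.inr (Or.inl (by omega))))
      · by_cases hc3_7 : 1 ≤ c123
        · exact Or.inr (Or.inr (Or.inr (Or.inr (Or.inr (Or.inr ((by omega)))))))
        · by_cases hc4_2 : 1 ≤ c2
          · exact Or.inr (Or.inl (by omega))
          · by_cases hc5_6 : 1 ≤ c23
            · exact Or.inr (Or.inr (Or.inr (Or.inr (Or.inr (Or.inl (by omega))))))
            · by_cases hc6_1 : 1 ≤ c1
              · exact Or.inl (by omega)
              · by_cases hc7_5 : 1 ≤ c13
                · exact Or.inr (Or.inr (Or.inr (Or.inr (Or.inl (by omega)))))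
                · exfalso; omega
  · rcases le_total v3 v1 with o|o
    · by_cases hc2_5 : 1 ≤ c13
      · exact Or.inr (Or.inr (Or.inr (Or.inr (Or.inl (by omega)))))
      · by_cases hc3_7 : 1 ≤ c123
        · exact Or.inr (Or.inr (Or.inr (Or.inr (Or.inr (Or.inr ((by omega)))))))
        · by_cases hc4_1 : 1 ≤ c1
          · exact Or.inl (by omega)
          · by_cases hc5_4 : 1 ≤ c12
            · exact Or.inr (Or.inr (Or.inr (Or.inl (by omega))))
            · by_cases hc6_3 : 1 ≤ c3
              · exact Or.inr (Or.inr (Or.inl (by omega)))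
              · by_cases hc7_6 : 1 ≤ c23
                · exact Or.inr (Or.inr (Or.inr (Or.inr (Or.inr (Or.inl (by omega))))))
                · exfalso; omega
    · by_cases hc2_5 : 1 ≤ c13
      · exact Or.inr (Or.inr (Or.inr (Or.inr (Or.inl (by omega)))))
      · by_cases hc3_7 : 1 ≤ c123
        · exact Or.inr (Or.inr (Or.inr (Or.inr (Or.inr (Or.inr ((by omega)))))))
        · by_cases hc4_3 : 1 ≤ c3
          · exact Or.inr (Or.inr (Or.inl (by omega)))
          · by_cases hc5_6 : 1 ≤ c23
            · exact Or.inr (Or.inr (Or.inr (Or.inr (Or.inr (Or.inl (by omega))))))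
            · by_cases hc6_1 : 1 ≤ c1
              · exact Or.inl (by omega)
              · by_cases hc7_4 : 1 ≤ c12
                · exact Or.inr (Or.inr (Or.inr (Or.inl (by omega))))
                · exfalso; omega
  · by_cases hc1_1 : 1 ≤ c1
    · exact Or.inl (by omega)
    · by_cases hc2_4 : 1 ≤ c12
      · exact Or.inr (Or.inr (Or.inr (Or.inl (by omega))))
      · by_cases hc3_5 : 1 ≤ c13
        · exact Or.inr (Or.inr (Or.inr (Or.inr (Or.inl (by omega)))))
        · by_cases hc4_7 : 1 ≤ c123
          · exact Or.inr (Or.inr (Or.inr (Or.inr (Or.inr (Or.inr ((by omega)))))))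
          · exfalso; omega
  · rcases le_total v3 v2 with o|o
    · by_cases hc2_6 : 1 ≤ c23
      · exact Or.inr (Or.inr (Or.inr (Or.inr (Or.inr (Or.inl (by omega))))))
      · by_cases hc3_7 : 1 ≤ c123
        · exact Or.inr (Or.inr (Or.inr (Or.inr (Or.inr (Or.inr ((by omega)))))))
        · by_cases hc4_2 : 1 ≤ c2
          · exact Or.inr (Or.inl (by omega))
          · by_cases hc5_4 : 1 ≤ c12
            · exact Or.inr (Or.inr (Or.inr (Or.inl (by omega))))
            · by_cases hc6_3 : 1 ≤ c3
              · exact Or.inr (Or.inr (Or.inl (by omega)))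
              · by_cases hc7_5 : 1 ≤ c13
                · exact Or.inr (Or.inr (Or.inr (Or.inr (Or.inl (by omega)))))
                · exfalso; omega
    · by_cases hc2_6 : 1 ≤ c23
      · exact Or.inr (Or.inr (Or.inr (Or.inr (Or.inr (Or.inl (by omega))))))
      · by_cases hc3_7 : 1 ≤ c123
        · exact Or.inr (Or.inr (Or.inr (Or.inr (Or.inr (Or.inr ((by omega)))))))
        · by_cases hc4_3 : 1 ≤ c3
          · exact Or.inr (Or.inr (Or.inl (by omega)))
          · by_cases hc5_5 : 1 ≤ c13
            · exact Or.inr (Or.inr (Or.inr (Or.inr (Or.inl (by omega)))))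
            · by_cases hc6_2 : 1 ≤ c2
              · exact Or.inr (Or.inl (by omega))
              · by_cases hc7_4 : 1 ≤ c12
                · exact Or.inr (Or.inr (Or.inr (Or.inl (by omega))))
                · exfalso; omega
  · by_cases hc1_2 : 1 ≤ c2
    · exact Or.inr (Or.inl (by omega))
    · by_cases hc2_4 : 1 ≤ c12
      · exact Or.inr (Or.inr (Or.inr (Or.inl (by omega))))
      · by_cases hc3_6 : 1 ≤ c23
        · exact Or.inr (Or.inr (Or.inr (Or.inr (Or.inr (Or.inl (by omega))))))
        · by_cases hc4_7 : 1 ≤ c123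
          · exact Or.inr (Or.inr (Or.inr (Or.inr (Or.inr (Or.inr ((by omega)))))))
          · exfalso; omega
  · by_cases hc1_3 : 1 ≤ c3
    · exact Or.inr (Or.inr (Or.inl (by omega)))
    · by_cases hc2_5 : 1 ≤ c13
      · exact Or.inr (Or.inr (Or.inr (Or.inr (Or.inl (by omega)))))
      · by_cases hc3_6 : 1 ≤ c23
        · exact Or.inr (Or.inr (Or.inr (Or.inr (Or.inr (Or.inl (by omega))))))
        · by_cases hc4_7 : 1 ≤ c123
          · exact Or.inr (Or.inr (Or.inr (Or.inr (Or.inr (Or.inr ((by omega)))))))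
          · exfalso; omega
  · exfalso; omega

lemma build3 (N : ℕ) : ∀ v1 v2 v3 c1 c2 c3 c12 c13 c23 c123 k : ℕ,
    v1+v2+v3 ≤ N →
    v1 ≤ k → v2 ≤ k → v3 ≤ k →
    v1 ≤ c1+c12+c13+c123 → v2 ≤ c2+c12+c23+c123 → v3 ≤ c3+c13+c23+c123 →
    v1+v2 ≤ k+c12+c123 → v1+v3 ≤ k+c13+c123 → v2+v3 ≤ k+c23+c123 →
    v1+v2+v3 ≤ k+c12+c13+c23+2*c123 →
    v1+v2+v3 ≤ 2*k+c123 →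
    ∃ a1 a2 a3 a12 a13 a23 a123 : ℕ,
      a1 ≤ c1 ∧ a2 ≤ c2 ∧ a3 ≤ c3 ∧ a12 ≤ c12 ∧ a13 ≤ c13 ∧ a23 ≤ c23 ∧ a123 ≤ c123 ∧
      a1+a2+a3+a12+a13+a23+a123 ≤ k ∧
      v1 ≤ a1+a12+a13+a123 ∧ v2 ≤ a2+a12+a23+a123 ∧ v3 ≤ a3+a13+a23+a123 := by
  induction N with
  | zero =>
    intro v1 v2 v3 c1 c2 c3 c12 c13 c23 c123 k hN h1 h2 h3 h4 h5 h6 h7 h8 h9 h10 h11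
    exact ⟨0,0,0,0,0,0,0, by omega⟩
  | succ N ih =>
    intro v1 v2 v3 c1 c2 c3 c12 c13 c23 c123 k hN h1 h2 h3 h4 h5 h6 h7 h8 h9 h10 h11
    by_cases h0 : v1+v2+v3 = 0
    · exact ⟨0,0,0,0,0,0,0, by omega⟩
    · rcases key3 v1 v2 v3 c1 c2 c3 c12 c13 c23 c123 k h1 h2 h3 h4 h5 h6 h7 h8 h9 h10 h11 (by omega)
        with B|B|B|B|B|B|B
      · obtain ⟨hc,hk2,hv,b1,b2,b3,b4,b5,b6,b7,b8,b9,b10,b11⟩ := B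
        obtain ⟨a1,a2,a3,a12,a13,a23,a123,H⟩ :=
          ih (v1-1) v2 v3 (c1-1) c2 c3 c12 c13 c23 c123 (k-1) (by omega) b1 b2 b3 b4 b5 b6 b7 b8 b9 b10 b11
        exact ⟨a1+1, a2, a3, a12, a13, a23, a123, by omega⟩
      · obtain ⟨hc,hk2,hv,b1,b2,b3,b4,b5,b6,b7,b8,b9,b10,b11⟩ := B
        obtain ⟨a1,a2,a3,a12,a13,a23,a123,H⟩ :=
          ih v1 (v2-1) v3 c1 (c2-1) c3 c12 c13 c23 c123 (k-1) (by omega) b1 b2 b3 b4 b5 b6 b7 b8 b9 b10 b11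
        exact ⟨a1, a2+1, a3, a12, a13, a23, a123, by omega⟩
      · obtain ⟨hc,hk2,hv,b1,b2,b3,b4,b5,b6,b7,b8,b9,b10,b11⟩ := B
        obtain ⟨a1,a2,a3,a12,a13,a23,a123,H⟩ :=
          ih v1 v2 (v3-1) c1 c2 (c3-1) c12 c13 c23 c123 (k-1) (by omega) b1 b2 b3 b4 b5 b6 b7 b8 b9 b10 b11
        exact ⟨a1, a2, a3+1, a12, a13, a23, a123, by omega⟩
      · obtain ⟨hc,hk2,hv,b1,b2,b3,b4,b5,b6,b7,b8,b9,b10,b11⟩ := B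
        obtain ⟨a1,a2,a3,a12,a13,a23,a123,H⟩ :=
          ih (v1-1) (v2-1) v3 c1 c2 c3 (c12-1) c13 c23 c123 (k-1) (by omega) b1 b2 b3 b4 b5 b6 b7 b8 b9 b10 b11
        exact ⟨a1, a2, a3, a12+1, a13, a23, a123, by omega⟩
      · obtain ⟨hc,hk2,hv,b1,b2,b3,b4,b5,b6,b7,b8,b9,b10,b11⟩ := B
        obtain ⟨a1,a2,a3,a12,a13,a23,a123,H⟩ :=
          ih (v1-1) v2 (v3-1) c1 c2 c3 c12 (c13-1) c23 c123 (k-1) (by omega) b1 b2 b3 b4 b5 b6 b7 b8 b9 b10 b11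
        exact ⟨a1, a2, a3, a12, a13+1, a23, a123, by omega⟩
      · obtain ⟨hc,hk2,hv,b1,b2,b3,b4,b5,b6,b7,b8,b9,b10,b11⟩ := B
        obtain ⟨a1,a2,a3,a12,a13,a23,a123,H⟩ :=
          ih v1 (v2-1) (v3-1) c1 c2 c3 c12 c13 (c23-1) c123 (k-1) (by omega) b1 b2 b3 b4 b5 b6 b7 b8 b9 b10 b11
        exact ⟨a1, a2, a3, a12, a13, a23+1, a123, by omega⟩
      · obtain ⟨hc,hk2,hv,b1,b2,b3,b4,b5,b6,b7,b8,b9,b10,b11⟩ := B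
        obtain ⟨a1,a2,a3,a12,a13,a23,a123,H⟩ :=
          ih (v1-1) (v2-1) (v3-1) c1 c2 c3 c12 c13 c23 (c123-1) (k-1) (by omega) b1 b2 b3 b4 b5 b6 b7 b8 b9 b10 b11
        exact ⟨a1, a2, a3, a12, a13, a23, a123+1, by omega⟩

lemma fracI3 (c : Typ 3 → ℕ) (k : ℕ) (u : Fin 3 → ℤ)
    (h : FracFeasible c k u) :
    (u 0).toNat ≤ k ∧ (u 1).toNat ≤ k ∧ (u 2).toNat ≤ k ∧
    (u 0).toNat ≤ c T1 + c T12 + c T13 + c T123 ∧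
    (u 1).toNat ≤ c T2 + c T12 + c T23 + c T123 ∧
    (u 2).toNat ≤ c T3 + c T13 + c T23 + c T123 ∧
    (u 0).toNat + (u 1).toNat ≤ k + c T12 + c T123 ∧
    (u 0).toNat + (u 2).toNat ≤ k + c T13 + c T123 ∧
    (u 1).toNat + (u 2).toNat ≤ k + c T23 + c T123 ∧
    (u 0).toNat + (u 1).toNat + (u 2).toNat ≤ k + c T12 + c T13 + c T23 + 2 * c T123 ∧
    (u 0).toNat + (u 1).toNat + (u 2).toNat ≤ 2 * k + c T123 := by
  obtain ⟨x, ⟨hx0, hxc, hxk⟩, hu⟩ := h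
  have n1 := hx0 T1; have n2 := hx0 T2; have n3 := hx0 T3; have n12 := hx0 T12
  have n13 := hx0 T13; have n23 := hx0 T23; have n123 := hx0 T123
  have d1 := hxc T1; have d2 := hxc T2; have d3 := hxc T3; have d12 := hxc T12
  have d13 := hxc T13; have d23 := hxc T23; have d123 := hxc T123
  rw [sumTyp3 x] at hxk
  have e0 : fracUtil x 0 = x T1 + x T12 + x T13 + x T123 := by
    unfold fracUtil
    rw [sumTyp3]
    rw [if_pos (by decide), if_neg (by decide), if_neg (by decide), if_pos (by decide),
        if_pos (by decide), if_neg (by decide), if_pos (by decide)]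
    ring
  have e1 : fracUtil x 1 = x T2 + x T12 + x T23 + x T123 := by
    unfold fracUtil
    rw [sumTyp3]
    rw [if_neg (by decide), if_pos (by decide), if_neg (by decide), if_pos (by decide),
        if_neg (by decide), if_pos (by decide), if_pos (by decide)]
    ring
  have e2 : fracUtil x 2 = x T3 + x T13 + x T23 + x T123 := by
    unfold fracUtil
    rw [sumTyp3]
    rw [if_neg (by decide), if_neg (by decide), if_pos (by decide), if_neg (by decide),
        if_pos (by decide), if_pos (by decide), if_pos (by decide)]
    ring
  have hu0 := hu 0; rw [e0] at hu0
  have hu1 := hu 1; rw [e1] at hu1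
  have hu2 := hu 2; rw [e2] at hu2
  have m0 : ((u 0).toNat : ℝ) ≤ x T1 + x T12 + x T13 + x T123 :=
    toNat_cast_le hu0 (by linarith)
  have m1 : ((u 1).toNat : ℝ) ≤ x T2 + x T12 + x T23 + x T123 :=
    toNat_cast_le hu1 (by linarith)
  have m2 : ((u 2).toNat : ℝ) ≤ x T3 + x T13 + x T23 + x T123 :=
    toNat_cast_le hu2 (by linarith)
  refine ⟨?_, ?_, ?_, ?_, ?_, ?_, ?_, ?_, ?_, ?_, ?_⟩
  · exact_mod_cast show ((u 0).toNat : ℝ) ≤ (k:ℝ) by linarith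
  · exact_mod_cast show ((u 1).toNat : ℝ) ≤ (k:ℝ) by linarith
  · exact_mod_cast show ((u 2).toNat : ℝ) ≤ (k:ℝ) by linarith
  · exact_mod_cast show ((u 0).toNat : ℝ) ≤ (c T1:ℝ) + c T12 + c T13 + c T123 by linarith
  · exact_mod_cast show ((u 1).toNat : ℝ) ≤ (c T2:ℝ) + c T12 + c T23 + c T123 by linarith
  · exact_mod_cast show ((u 2).toNat : ℝ) ≤ (c T3:ℝ) + c T13 + c T23 + c T123 by linarith
  · exact_mod_cast show ((u 0).toNat : ℝ) + (u 1).toNat ≤ (k:ℝ) + c T12 + c T123 by linarith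
  · exact_mod_cast show ((u 0).toNat : ℝ) + (u 2).toNat ≤ (k:ℝ) + c T13 + c T123 by linarith
  · exact_mod_cast show ((u 1).toNat : ℝ) + (u 2).toNat ≤ (k:ℝ) + c T23 + c T123 by linarith
  · exact_mod_cast show ((u 0).toNat : ℝ) + (u 1).toNat + (u 2).toNat ≤ (k:ℝ) + c T12 + c T13 + c T23 + 2 * c T123 by linarith
  · exact_mod_cast show ((u 0).toNat : ℝ) + (u 1).toNat + (u 2).toNat ≤ 2*(k:ℝ) + c T123 by linarith

lemma case0 (c : Typ 0 → ℕ) (k : ℕ) : Integralizable c k := by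
  intro u _
  refine ⟨fun _ => 0, ⟨fun R => Nat.zero_le _, ?_⟩, fun i => i.elim0⟩
  simp

lemma case1 (c : Typ 1 → ℕ) (k : ℕ) : Integralizable c k := by
  intro u hf
  obtain ⟨x, ⟨hx0, hxc, hxk⟩, hu⟩ := hf
  rw [sumTyp1 x] at hxk
  have e0 : fracUtil x 0 = x U1 := by
    unfold fracUtil
    rw [sumTyp1, if_pos (by decide)]
  have hu0 := hu 0; rw [e0] at hu0
  have m0 : ((u 0).toNat : ℝ) ≤ x U1 := toNat_cast_le hu0 (hx0 U1)
  have hk : (u 0).toNat ≤ k := by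
    exact_mod_cast show ((u 0).toNat : ℝ) ≤ (k:ℝ) by linarith
  have hc : (u 0).toNat ≤ c U1 := by
    have := hxc U1
    exact_mod_cast show ((u 0).toNat : ℝ) ≤ (c U1:ℝ) by linarith
  have hall : ∀ R : Typ 1, R = U1 := by decide
  refine ⟨fun _ => (u 0).toNat, ⟨?_, ?_⟩, ?_⟩
  · intro R; rw [hall R]; exact hc
  · rw [sumTyp1]; exact hk
  · intro i
    fin_cases i
    have i0 : intUtil (fun _ : Typ 1 => (u 0).toNat) 0 = ((u 0).toNat : ℤ) := by
      unfold intUtil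
      rw [sumTyp1, if_pos (by decide)]
    show u 0 ≤ intUtil (fun _ : Typ 1 => (u 0).toNat) 0
    rw [i0]
    omega

lemma case2 (c : Typ 2 → ℕ) (k : ℕ) : Integralizable c k := by
  intro u hf
  obtain ⟨x, ⟨hx0, hxc, hxk⟩, hu⟩ := hf
  have n1 := hx0 V1; have n2 := hx0 V2; have n12 := hx0 V12
  have d1 := hxc V1; have d2 := hxc V2; have d12 := hxc V12
  rw [sumTyp2 x] at hxk
  have e0 : fracUtil x 0 = x V1 + x V12 := by
    unfold fracUtil
    rw [sumTyp2, if_pos (by decide), if_neg (by decide), if_pos (by decide)]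
    ring
  have e1 : fracUtil x 1 = x V2 + x V12 := by
    unfold fracUtil
    rw [sumTyp2, if_neg (by decide), if_pos (by decide), if_pos (by decide)]
    ring
  have hu0 := hu 0; rw [e0] at hu0
  have hu1 := hu 1; rw [e1] at hu1
  have m0 : ((u 0).toNat : ℝ) ≤ x V1 + x V12 := toNat_cast_le hu0 (by linarith)
  have m1 : ((u 1).toNat : ℝ) ≤ x V2 + x V12 := toNat_cast_le hu1 (by linarith)
  have h1 : (u 0).toNat ≤ k := by
    exact_mod_cast show ((u 0).toNat : ℝ) ≤ (k:ℝ) by linarith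
  have h2 : (u 1).toNat ≤ k := by
    exact_mod_cast show ((u 1).toNat : ℝ) ≤ (k:ℝ) by linarith
  have h3 : (u 0).toNat ≤ c V1 + c V12 := by
    exact_mod_cast show ((u 0).toNat : ℝ) ≤ (c V1:ℝ) + c V12 by linarith
  have h4 : (u 1).toNat ≤ c V2 + c V12 := by
    exact_mod_cast show ((u 1).toNat : ℝ) ≤ (c V2:ℝ) + c V12 by linarith
  have h5 : (u 0).toNat + (u 1).toNat ≤ k + c V12 := by
    exact_mod_cast show ((u 0).toNat : ℝ) + (u 1).toNat ≤ (k:ℝ) + c V12 by linarith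
  set a12 : ℕ := min (c V12) (max (u 0).toNat (u 1).toNat) with ha12
  set a1 : ℕ := (u 0).toNat - a12 with ha1
  set a2 : ℕ := (u 1).toNat - a12 with ha2
  set y : Typ 2 → ℕ := fun R => if R = V1 then a1 else if R = V2 then a2 else a12 with hydef
  have q21 : V2 ≠ V1 := by decide
  have q121 : V12 ≠ V1 := by decide
  have q122 : V12 ≠ V2 := by decide
  have ey1 : y V1 = a1 := by simp [hydef]
  have ey2 : y V2 = a2 := by simp [hydef, q21]
  have ey12 : y V12 = a12 := by simp [hydef, q121, q122]
  have hall : ∀ R : Typ 2, R = V1 ∨ R = V2 ∨ R = V12 := by decide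
  have i0 : intUtil y 0 = (y V1 : ℤ) + y V12 := by
    unfold intUtil
    rw [sumTyp2, if_pos (by decide), if_neg (by decide), if_pos (by decide)]
    ring
  have i1 : intUtil y 1 = (y V2 : ℤ) + y V12 := by
    unfold intUtil
    rw [sumTyp2, if_neg (by decide), if_pos (by decide), if_pos (by decide)]
    ring
  refine ⟨y, ⟨?_, ?_⟩, ?_⟩
  · intro R
    rcases hall R with rfl|rfl|rfl <;> omega
  · rw [sumTyp2]; omega
  · intro i
    fin_cases i
    · show u 0 ≤ intUtil y 0
      rw [i0]; omega
    · show u 1 ≤ intUtil y 1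
      rw [i1]; omega

lemma case3 (c : Typ 3 → ℕ) (k : ℕ) : Integralizable c k := by
  intro u hf
  obtain ⟨h1,h2,h3,h4,h5,h6,h7,h8,h9,h10,h11⟩ := fracI3 c k u hf
  obtain ⟨a1,a2,a3,a12,a13,a23,a123,H⟩ :=
    build3 ((u 0).toNat + (u 1).toNat + (u 2).toNat) (u 0).toNat (u 1).toNat (u 2).toNat
      (c T1) (c T2) (c T3) (c T12) (c T13) (c T23) (c T123) k (le_refl _)
      h1 h2 h3 h4 h5 h6 h7 h8 h9 h10 h11
  set x : Typ 3 → ℕ := fun R =>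
    if R = T1 then a1 else if R = T2 then a2 else if R = T3 then a3 else
    if R = T12 then a12 else if R = T13 then a13 else if R = T23 then a23 else a123
    with hxdef
  have ne21 : T2 ≠ T1 := by decide
  have ne31 : T3 ≠ T1 := by decide
  have ne32 : T3 ≠ T2 := by decide
  have ne121 : T12 ≠ T1 := by decide
  have ne122 : T12 ≠ T2 := by decide
  have ne123 : T12 ≠ T3 := by decide
  have ne131 : T13 ≠ T1 := by decide
  have ne132 : T13 ≠ T2 := by decide
  have ne133 : T13 ≠ T3 := by decide
  have ne1312 : T13 ≠ T12 := by decide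
  have ne231 : T23 ≠ T1 := by decide
  have ne232 : T23 ≠ T2 := by decide
  have ne233 : T23 ≠ T3 := by decide
  have ne2312 : T23 ≠ T12 := by decide
  have ne2313 : T23 ≠ T13 := by decide
  have nf1 : T123 ≠ T1 := by decide
  have nf2 : T123 ≠ T2 := by decide
  have nf3 : T123 ≠ T3 := by decide
  have nf12 : T123 ≠ T12 := by decide
  have nf13 : T123 ≠ T13 := by decide
  have nf23 : T123 ≠ T23 := by decide
  have ex1 : x T1 = a1 := by simp [hxdef]
  have ex2 : x T2 = a2 := by simp [hxdef, ne21]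
  have ex3 : x T3 = a3 := by simp [hxdef, ne31, ne32]
  have ex12 : x T12 = a12 := by simp [hxdef, ne121, ne122, ne123]
  have ex13 : x T13 = a13 := by simp [hxdef, ne131, ne132, ne133, ne1312]
  have ex23 : x T23 = a23 := by simp [hxdef, ne231, ne232, ne233, ne2312, ne2313]
  have ex123 : x T123 = a123 := by simp [hxdef, nf1, nf2, nf3, nf12, nf13, nf23]
  have hall : ∀ R : Typ 3, R = T1 ∨ R = T2 ∨ R = T3 ∨ R = T12 ∨ R = T13 ∨ R = T23 ∨ R = T123 := by decide
  have i0 : intUtil x 0 = (x T1 : ℤ) + x T12 + x T13 + x T123 := by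
    unfold intUtil
    rw [sumTyp3]
    rw [if_pos (by decide), if_neg (by decide), if_neg (by decide), if_pos (by decide),
        if_pos (by decide), if_neg (by decide), if_pos (by decide)]
    ring
  have i1 : intUtil x 1 = (x T2 : ℤ) + x T12 + x T23 + x T123 := by
    unfold intUtil
    rw [sumTyp3]
    rw [if_neg (by decide), if_pos (by decide), if_neg (by decide), if_pos (by decide),
        if_neg (by decide), if_pos (by decide), if_pos (by decide)]
    ring
  have i2 : intUtil x 2 = (x T3 : ℤ) + x T13 + x T23 + x T123 := by
    unfold intUtil
    rw [sumTyp3]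
    rw [if_neg (by decide), if_neg (by decide), if_pos (by decide), if_neg (by decide),
        if_pos (by decide), if_pos (by decide), if_pos (by decide)]
    ring
  refine ⟨x, ⟨?_, ?_⟩, ?_⟩
  · intro R
    rcases hall R with rfl|rfl|rfl|rfl|rfl|rfl|rfl <;> omega
  · rw [sumTyp3]
    omega
  · intro i
    fin_cases i
    · show u 0 ≤ intUtil x 0
      rw [i0]; omega
    · show u 1 ≤ intUtil x 1
      rw [i1]; omega
    · show u 2 ≤ intUtil x 2
      rw [i2]; omega


/-- For `n ≤ 3` voters, every instance `(c, k)` is integralizable. -/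
theorem stmt11 (n : ℕ) (hn : n ≤ 3) (c : Typ n → ℕ) (k : ℕ) :
    Integralizable c k := by
  interval_cases n
  · exact case0 c k
  · exact case1 c k
  · exact case2 c k
  · exact case3 c k
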